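/- The Vaisman-Tricerri metric ω₀ on H×ℂ (with parameter m) satisfies the Gauduchon condition ∂∂̄ω₀ = 0, i.e., it is a Gauduchon metric. -/

import Mathlib

open Complex ContinuousLinearMap

/-- Wirtinger derivative `∂/∂z_i` (i = 0 is `z`, i = 1 is `w`) on `ℂ × ℂ`. -/
noncomputable def wd (i : Fin 2) (f : ℂ × ℂ → ℂ) (p : ℂ × ℂ) : ℂ :=
  if i = 0 then (fderiv ℝ f p (1, 0) - Complex.I * fderiv ℝ f p (Complex.I, 0)) / 2
  else (fderiv ℝ f p (0, 1) - Complex.I * fderiv ℝ f p (0, Complex.I)) / 2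

/-- Wirtinger derivative `∂/∂z̄_i` on `ℂ × ℂ`. -/
noncomputable def wdb (i : Fin 2) (f : ℂ × ℂ → ℂ) (p : ℂ × ℂ) : ℂ :=
  if i = 0 then (fderiv ℝ f p (1, 0) + Complex.I * fderiv ℝ f p (Complex.I, 0)) / 2
  else (fderiv ℝ f p (0, 1) + Complex.I * fderiv ℝ f p (0, Complex.I)) / 2

/-- The coefficients of the Vaisman–Tricerri metric on `H×ℂ` with parameter `m`. -/
noncomputable def gTV (m : ℝ) (i j : Fin 2) (p : ℂ × ℂ) : ℂ :=
  if i = 0 ∧ j = 0 then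
    (((1 + (p.2.im - m * Real.log p.1.im) ^ 2) / p.1.im ^ 2 : ℝ) : ℂ)
  else if i = 1 ∧ j = 1 then 1
  else ((-( (p.2.im - m * Real.log p.1.im) / p.1.im) : ℝ) : ℂ)

noncomputable def LY : ℂ × ℂ →L[ℝ] ℝ := Complex.imCLM.comp (ContinuousLinearMap.fst ℝ ℂ ℂ)
noncomputable def LV : ℂ × ℂ →L[ℝ] ℝ := Complex.imCLM.comp (ContinuousLinearMap.snd ℝ ℂ ℂ)

lemma wd0_eq {f : ℂ × ℂ → ℂ} {L : ℂ × ℂ →L[ℝ] ℂ} {q : ℂ × ℂ} (h : HasFDerivAt f L q) :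
    wd 0 f q = (L (1, 0) - Complex.I * L (Complex.I, 0)) / 2 := by
  simp [wd, h.fderiv]

lemma wd1_eq {f : ℂ × ℂ → ℂ} {L : ℂ × ℂ →L[ℝ] ℂ} {q : ℂ × ℂ} (h : HasFDerivAt f L q) :
    wd 1 f q = (L (0, 1) - Complex.I * L (0, Complex.I)) / 2 := by
  simp [wd, h.fderiv]

lemma wdb0_eq {f : ℂ × ℂ → ℂ} {L : ℂ × ℂ →L[ℝ] ℂ} {q : ℂ × ℂ} (h : HasFDerivAt f L q) :
    wdb 0 f q = (L (1, 0) + Complex.I * L (Complex.I, 0)) / 2 := by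
  simp [wdb, h.fderiv]

lemma wdb1_eq {f : ℂ × ℂ → ℂ} {L : ℂ × ℂ →L[ℝ] ℂ} {q : ℂ × ℂ} (h : HasFDerivAt f L q) :
    wdb 1 f q = (L (0, 1) + Complex.I * L (0, Complex.I)) / 2 := by
  simp [wdb, h.fderiv]

lemma hY (q : ℂ × ℂ) : HasFDerivAt (fun q : ℂ × ℂ => q.1.im) LY q := LY.hasFDerivAt

lemma hphi (m : ℝ) {q : ℂ × ℂ} (hq : 0 < q.1.im) :
    HasFDerivAt (fun q : ℂ × ℂ => q.2.im - m * Real.log q.1.im)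
      (LV - (m * q.1.im⁻¹) • LY) q := by
  have h1 := ((Real.hasDerivAt_log (ne_of_gt hq)).comp_hasFDerivAt q (hY q)).const_mul m
  have h2 : HasFDerivAt (fun q : ℂ × ℂ => q.2.im) LV q := LV.hasFDerivAt
  have h3 := h2.sub h1
  rw [smul_smul] at h3
  exact h3

lemma LY_eval : LY (1,0) = 0 ∧ LY (Complex.I, 0) = 1 ∧ LY (0,1) = 0 ∧ LY (0,Complex.I) = 0 := by
  simp [LY]

example (m : ℝ) {q : ℂ × ℂ} (hq : 0 < q.1.im) :
    (LV - (m * q.1.im⁻¹) • LY) (0, Complex.I) = 1 := by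
  simp [LY, LV]

lemma g00_eq (m : ℝ) : gTV m 0 0 =
    fun q : ℂ × ℂ => (((1 + (q.2.im - m * Real.log q.1.im) ^ 2) / q.1.im ^ 2 : ℝ) : ℂ) := by
  funext q; simp [gTV]

lemma g11_eq (m : ℝ) : gTV m 1 1 = fun _ => (1 : ℂ) := by
  funext q; simp [gTV]

lemma g10_eq (m : ℝ) : gTV m 1 0 =
    fun q : ℂ × ℂ => ((-( (q.2.im - m * Real.log q.1.im) / q.1.im) : ℝ) : ℂ) := by
  funext q; simp [gTV]

lemma g01_eq (m : ℝ) : gTV m 0 1 =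
    fun q : ℂ × ℂ => ((-( (q.2.im - m * Real.log q.1.im) / q.1.im) : ℝ) : ℂ) := by
  funext q; simp [gTV]

lemma hinv2 {q : ℂ × ℂ} (hq : 0 < q.1.im) :
    HasFDerivAt (fun q : ℂ × ℂ => (q.1.im * q.1.im)⁻¹)
      ((-((q.1.im * q.1.im) ^ 2)⁻¹) • (q.1.im • LY + q.1.im • LY)) q :=
  (hasDerivAt_inv (by positivity)).comp_hasFDerivAt q ((hY q).mul (hY q))

noncomputable def G00 (m : ℝ) : ℂ × ℂ → ℂ := fun q =>
  Complex.I * (((q.2.im - m * Real.log q.1.im) * (q.1.im * q.1.im)⁻¹ : ℝ) : ℂ)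

noncomputable def G10 : ℂ × ℂ → ℂ := fun q =>
  Complex.I * ((-(q.1.im)⁻¹ : ℝ) : ℂ) / 2

noncomputable def G01 (m : ℝ) : ℂ × ℂ → ℂ := fun q =>
  Complex.I * (((q.2.im - m * Real.log q.1.im + m) * (q.1.im * q.1.im)⁻¹ : ℝ) : ℂ) / 2

lemma hinv1 {q : ℂ × ℂ} (hq : 0 < q.1.im) :
    HasFDerivAt (fun q : ℂ × ℂ => (q.1.im)⁻¹) ((-(q.1.im ^ 2)⁻¹) • LY) q :=
  (hasDerivAt_inv (ne_of_gt hq)).comp_hasFDerivAt q (hY q)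

-- inner derivative for g00
lemma inner00 (m : ℝ) {q : ℂ × ℂ} (hq : 0 < q.1.im) :
    wdb 1 (gTV m 0 0) q = G00 m q := by
  unfold G00
  have hyne : q.1.im ≠ 0 := ne_of_gt hq
  set φ := fun q : ℂ × ℂ => q.2.im - m * Real.log q.1.im with hφdef
  have hn : HasFDerivAt (fun q : ℂ × ℂ => 1 + φ q * φ q)
      (φ q • (LV - (m * q.1.im⁻¹) • LY) + φ q • (LV - (m * q.1.im⁻¹) • LY)) q :=
    ((hphi m hq).mul (hphi m hq)).const_add 1
  have hF := hn.mul (hinv2 hq)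
  have hC := (Complex.ofRealCLM.hasFDerivAt).comp q hF
  have hg : gTV m 0 0 = fun q : ℂ × ℂ =>
      (((1 + φ q * φ q) * (q.1.im * q.1.im)⁻¹ : ℝ) : ℂ) := by
    rw [g00_eq m]; funext q
    norm_num [div_eq_mul_inv, pow_two, hφdef]
  have hC' : HasFDerivAt (fun q : ℂ × ℂ =>
      (((1 + φ q * φ q) * (q.1.im * q.1.im)⁻¹ : ℝ) : ℂ))
      (Complex.ofRealCLM.comp
        ((1 + φ q * φ q) • -((q.1.im * q.1.im) ^ 2)⁻¹ • (q.1.im • LY + q.1.im • LY) +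
          (q.1.im * q.1.im)⁻¹ •
            (φ q • (LV - (m * q.1.im⁻¹) • LY) + φ q • (LV - (m * q.1.im⁻¹) • LY)))) q := hC
  rw [hg, wdb1_eq hC']
  have h1 : (q.1.im : ℂ) ≠ 0 := Complex.ofReal_ne_zero.2 hyne
  simp only [ContinuousLinearMap.comp_apply, ContinuousLinearMap.add_apply,
    ContinuousLinearMap.smul_apply, ContinuousLinearMap.sub_apply, Complex.ofRealCLM_apply,
    LY, LV, Complex.imCLM_apply, ContinuousLinearMap.coe_comp', Function.comp_apply,
    ContinuousLinearMap.coe_fst', ContinuousLinearMap.coe_snd']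
  simp only [mul_zero, zero_mul, mul_one, one_mul, smul_eq_mul, mul_zero, add_zero, zero_add,
    Complex.ofReal_zero, Complex.I_im, Complex.one_im, Complex.zero_im]
  push_cast [hφdef]
  field_simp
  ring

-- inner derivative for g10
lemma inner10 (m : ℝ) {q : ℂ × ℂ} (hq : 0 < q.1.im) :
    wdb 1 (gTV m 1 0) q = G10 q := by
  unfold G10
  have hyne : q.1.im ≠ 0 := ne_of_gt hq
  set φ := fun q : ℂ × ℂ => q.2.im - m * Real.log q.1.im with hφdef
  have hF := ((hphi m hq).mul (hinv1 hq)).neg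
  have hC := (Complex.ofRealCLM.hasFDerivAt).comp q hF
  have hC' : HasFDerivAt (fun q : ℂ × ℂ => ((-(φ q * (q.1.im)⁻¹) : ℝ) : ℂ))
      (Complex.ofRealCLM.comp
        (-(φ q • (-(q.1.im ^ 2)⁻¹) • LY +
            (q.1.im)⁻¹ • (LV - (m * q.1.im⁻¹) • LY)))) q := hC
  have hg : gTV m 1 0 = fun q : ℂ × ℂ => ((-(φ q * (q.1.im)⁻¹) : ℝ) : ℂ) := by
    rw [g10_eq m]; funext q; norm_num [div_eq_mul_inv, hφdef]
  rw [hg, wdb1_eq hC']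
  have h1 : (q.1.im : ℂ) ≠ 0 := Complex.ofReal_ne_zero.2 hyne
  simp only [ContinuousLinearMap.comp_apply, ContinuousLinearMap.add_apply,
    ContinuousLinearMap.neg_apply, ContinuousLinearMap.smul_apply,
    ContinuousLinearMap.sub_apply, Complex.ofRealCLM_apply,
    LY, LV, Complex.imCLM_apply, ContinuousLinearMap.coe_comp', Function.comp_apply,
    ContinuousLinearMap.coe_fst', ContinuousLinearMap.coe_snd']
  simp only [mul_zero, zero_mul, mul_one, one_mul, smul_eq_mul, add_zero, zero_add,
    Complex.ofReal_zero, Complex.I_im, Complex.one_im, Complex.zero_im]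
  push_cast [hφdef]
  ring

-- inner derivative for g01
lemma inner01 (m : ℝ) {q : ℂ × ℂ} (hq : 0 < q.1.im) :
    wdb 0 (gTV m 0 1) q = G01 m q := by
  unfold G01
  have hyne : q.1.im ≠ 0 := ne_of_gt hq
  set φ := fun q : ℂ × ℂ => q.2.im - m * Real.log q.1.im with hφdef
  have hF := ((hphi m hq).mul (hinv1 hq)).neg
  have hC := (Complex.ofRealCLM.hasFDerivAt).comp q hF
  have hC' : HasFDerivAt (fun q : ℂ × ℂ => ((-(φ q * (q.1.im)⁻¹) : ℝ) : ℂ))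
      (Complex.ofRealCLM.comp
        (-(φ q • (-(q.1.im ^ 2)⁻¹) • LY +
            (q.1.im)⁻¹ • (LV - (m * q.1.im⁻¹) • LY)))) q := hC
  have hg : gTV m 0 1 = fun q : ℂ × ℂ => ((-(φ q * (q.1.im)⁻¹) : ℝ) : ℂ) := by
    rw [g01_eq m]; funext q; norm_num [div_eq_mul_inv, hφdef]
  rw [hg, wdb0_eq hC']
  have h1 : (q.1.im : ℂ) ≠ 0 := Complex.ofReal_ne_zero.2 hyne
  simp only [ContinuousLinearMap.comp_apply, ContinuousLinearMap.add_apply,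
    ContinuousLinearMap.neg_apply, ContinuousLinearMap.smul_apply,
    ContinuousLinearMap.sub_apply, Complex.ofRealCLM_apply,
    LY, LV, Complex.imCLM_apply, ContinuousLinearMap.coe_comp', Function.comp_apply,
    ContinuousLinearMap.coe_fst', ContinuousLinearMap.coe_snd']
  simp only [mul_zero, zero_mul, mul_one, one_mul, smul_eq_mul, add_zero, zero_add,
    Complex.ofReal_zero, Complex.I_im, Complex.one_im, Complex.zero_im, Complex.I_re]
  push_cast [hφdef]
  field_simp
  ring

lemma outer00 (m : ℝ) {p : ℂ × ℂ} (hp : 0 < p.1.im) :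
    wd 1 (G00 m) p = (((p.1.im ^ 2)⁻¹ : ℝ) : ℂ) / 2 := by
  have hyne : p.1.im ≠ 0 := ne_of_gt hp
  set φ := fun q : ℂ × ℂ => q.2.im - m * Real.log q.1.im with hφdef
  have hF := (hphi m hp).mul (hinv2 hp)
  have hC := (Complex.ofRealCLM.hasFDerivAt).comp p hF
  have hC' : HasFDerivAt (G00 m)
      (Complex.I • (Complex.ofRealCLM.comp
        (φ p • (-((p.1.im * p.1.im) ^ 2)⁻¹) • (p.1.im • LY + p.1.im • LY) +
          (p.1.im * p.1.im)⁻¹ • (LV - (m * p.1.im⁻¹) • LY)))) p := hC.const_mul Complex.I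
  rw [wd1_eq hC']
  have h1 : (p.1.im : ℂ) ≠ 0 := Complex.ofReal_ne_zero.2 hyne
  simp only [ContinuousLinearMap.comp_apply, ContinuousLinearMap.add_apply,
    ContinuousLinearMap.neg_apply, ContinuousLinearMap.smul_apply,
    ContinuousLinearMap.sub_apply, Complex.ofRealCLM_apply,
    LY, LV, Complex.imCLM_apply, ContinuousLinearMap.coe_comp', Function.comp_apply,
    ContinuousLinearMap.coe_fst', ContinuousLinearMap.coe_snd']
  simp only [mul_zero, zero_mul, mul_one, one_mul, smul_eq_mul, add_zero, zero_add,
    Complex.ofReal_zero, Complex.I_im, Complex.one_im, Complex.zero_im]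
  push_cast [hφdef]
  field_simp
  ring_nf
  rw [Complex.I_sq]
  ring

lemma G10_alt : G10 = fun q : ℂ × ℂ => (Complex.I / 2) * ((-(q.1.im)⁻¹ : ℝ) : ℂ) := by
  funext q; unfold G10; ring

lemma outer10 {p : ℂ × ℂ} (hp : 0 < p.1.im) :
    wd 0 G10 p = (((p.1.im ^ 2)⁻¹ : ℝ) : ℂ) / 4 := by
  have hyne : p.1.im ≠ 0 := ne_of_gt hp
  have hF := (hinv1 hp).neg
  have hC := (Complex.ofRealCLM.hasFDerivAt).comp p hF
  have hC' : HasFDerivAt (fun q : ℂ × ℂ => (Complex.I / 2) * ((-(q.1.im)⁻¹ : ℝ) : ℂ))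
      ((Complex.I / 2) • (Complex.ofRealCLM.comp (-((-(p.1.im ^ 2)⁻¹) • LY)))) p :=
    hC.const_mul (Complex.I / 2)
  rw [G10_alt, wd0_eq hC']
  have h1 : (p.1.im : ℂ) ≠ 0 := Complex.ofReal_ne_zero.2 hyne
  simp only [ContinuousLinearMap.comp_apply, ContinuousLinearMap.neg_apply,
    ContinuousLinearMap.smul_apply, Complex.ofRealCLM_apply,
    LY, Complex.imCLM_apply, ContinuousLinearMap.coe_comp', Function.comp_apply,
    ContinuousLinearMap.coe_fst']
  simp only [mul_zero, zero_mul, mul_one, one_mul, smul_eq_mul, add_zero, zero_add,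
    Complex.ofReal_zero, Complex.I_im, Complex.one_im, Complex.zero_im]
  push_cast
  field_simp
  ring_nf
  rw [Complex.I_sq]
  ring

lemma G01_alt (m : ℝ) : G01 m = fun q : ℂ × ℂ =>
    (Complex.I / 2) * (((q.2.im - m * Real.log q.1.im + m) * (q.1.im * q.1.im)⁻¹ : ℝ) : ℂ) := by
  funext q; unfold G01; ring

lemma outer01 (m : ℝ) {p : ℂ × ℂ} (hp : 0 < p.1.im) :
    wd 1 (G01 m) p = (((p.1.im ^ 2)⁻¹ : ℝ) : ℂ) / 4 := by
  have hyne : p.1.im ≠ 0 := ne_of_gt hp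
  set φ := fun q : ℂ × ℂ => q.2.im - m * Real.log q.1.im with hφdef
  have hF := ((hphi m hp).add_const m).mul (hinv2 hp)
  have hC := (Complex.ofRealCLM.hasFDerivAt).comp p hF
  have hC' : HasFDerivAt (fun q : ℂ × ℂ =>
      (Complex.I / 2) * (((φ q + m) * (q.1.im * q.1.im)⁻¹ : ℝ) : ℂ))
      ((Complex.I / 2) • (Complex.ofRealCLM.comp
        ((φ p + m) • (-((p.1.im * p.1.im) ^ 2)⁻¹) • (p.1.im • LY + p.1.im • LY) +
          (p.1.im * p.1.im)⁻¹ • (LV - (m * p.1.im⁻¹) • LY)))) p :=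
    hC.const_mul (Complex.I / 2)
  rw [G01_alt, wd1_eq hC']
  have h1 : (p.1.im : ℂ) ≠ 0 := Complex.ofReal_ne_zero.2 hyne
  simp only [ContinuousLinearMap.comp_apply, ContinuousLinearMap.add_apply,
    ContinuousLinearMap.neg_apply, ContinuousLinearMap.smul_apply,
    ContinuousLinearMap.sub_apply, Complex.ofRealCLM_apply,
    LY, LV, Complex.imCLM_apply, ContinuousLinearMap.coe_comp', Function.comp_apply,
    ContinuousLinearMap.coe_fst', ContinuousLinearMap.coe_snd']
  simp only [mul_zero, zero_mul, mul_one, one_mul, smul_eq_mul, add_zero, zero_add,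
    Complex.ofReal_zero, Complex.I_im, Complex.one_im, Complex.zero_im]
  push_cast [hφdef]
  field_simp
  ring_nf
  rw [Complex.I_sq]
  ring

theorem stmt9 (m : ℝ) (p : ℂ × ℂ) (hp : 0 < p.1.im) :
    wd 0 (wdb 0 (gTV m 1 1)) p + wd 1 (wdb 1 (gTV m 0 0)) p
      - wd 0 (wdb 1 (gTV m 1 0)) p - wd 1 (wdb 0 (gTV m 0 1)) p = 0 := by
  have hopen : IsOpen {q : ℂ × ℂ | 0 < q.1.im} :=
    isOpen_lt continuous_const (Complex.continuous_im.comp continuous_fst)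
  have hmem : {q : ℂ × ℂ | 0 < q.1.im} ∈ nhds p := hopen.mem_nhds hp
  have t1 : wd 0 (wdb 0 (gTV m 1 1)) p = 0 := by
    have h0 : wdb 0 (gTV m 1 1) = fun _ => (0 : ℂ) := by
      funext q
      rw [g11_eq m]
      simp [wdb, fderiv_const]
    rw [h0]
    simp [wd, fderiv_const]
  have e2 : fderiv ℝ (wdb 1 (gTV m 0 0)) p = fderiv ℝ (G00 m) p :=
    Filter.EventuallyEq.fderiv_eq
      (Filter.eventually_of_mem hmem fun q hq => inner00 m hq)
  have e3 : fderiv ℝ (wdb 1 (gTV m 1 0)) p = fderiv ℝ G10 p :=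
    Filter.EventuallyEq.fderiv_eq
      (Filter.eventually_of_mem hmem fun q hq => inner10 m hq)
  have e4 : fderiv ℝ (wdb 0 (gTV m 0 1)) p = fderiv ℝ (G01 m) p :=
    Filter.EventuallyEq.fderiv_eq
      (Filter.eventually_of_mem hmem fun q hq => inner01 m hq)
  have t2 : wd 1 (wdb 1 (gTV m 0 0)) p = wd 1 (G00 m) p := by unfold wd; rw [e2]
  have t3 : wd 0 (wdb 1 (gTV m 1 0)) p = wd 0 G10 p := by unfold wd; rw [e3]
  have t4 : wd 1 (wdb 0 (gTV m 0 1)) p = wd 1 (G01 m) p := by unfold wd; rw [e4]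
  rw [t1, t2, t3, t4, outer00 m hp, outer10 hp, outer01 m hp]
  ring
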